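/- arXiv:0705.0372 — 7 statements merged into one kernel-verified Lean document; each statement's English description precedes it below -/
import Mathlib

section
/- For every γ ∈ (0,1) there exists a constant B > 1 such that for all x > 0, x·U(ln x) + x·U(ln x)² ≤ B(x−1) + ((B−1)/γ)(1−x^γ), where U(t) := min(t,1) is the truncation function. -/
open Real Set

private lemma aux_deriv_g (γ B : ℝ) (hγ : γ ≠ 0) {x : ℝ} (hx : 0 < x) :
    HasDerivAt (fun y : ℝ => B*(y-1) + ((B-1)/γ)*(1 - y^γ) - (y*Real.log y + y*(Real.log y)^2))
      (B - (B-1)*x^(γ-1) - ((Real.log x)^2 + 3*Real.log x + 1)) x := by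
  have hr : HasDerivAt (fun y : ℝ => y ^ γ) (γ * x ^ (γ-1)) x :=
    Real.hasDerivAt_rpow_const (Or.inl hx.ne')
  have hlog : HasDerivAt Real.log x⁻¹ x := Real.hasDerivAt_log hx.ne'
  have hA : HasDerivAt (fun y : ℝ => B*(y-1)) (B * 1) x :=
    ((hasDerivAt_id x).sub_const 1).const_mul B
  have hB : HasDerivAt (fun y : ℝ => ((B-1)/γ)*(1 - y^γ)) (((B-1)/γ)*(0 - γ*x^(γ-1))) x :=
    ((hasDerivAt_const x (1:ℝ)).sub hr).const_mul ((B-1)/γ)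
  have hC : HasDerivAt (fun y : ℝ => y * Real.log y) (1 * Real.log x + x * x⁻¹) x :=
    (hasDerivAt_id x).mul hlog
  have hsq : HasDerivAt (fun y : ℝ => (Real.log y)^2) (((2:ℕ):ℝ) * Real.log x ^ (2-1) * x⁻¹) x :=
    hlog.pow 2
  have hD : HasDerivAt (fun y : ℝ => y * (Real.log y)^2)
      (1 * (Real.log x)^2 + x * (((2:ℕ):ℝ) * Real.log x ^ (2-1) * x⁻¹)) x :=
    (hasDerivAt_id x).mul hsq
  have total := (hA.add hB).sub (hC.add hD)
  refine total.congr_deriv ?_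
  have hx' : x ≠ 0 := hx.ne'
  field_simp
  ring

private lemma aux_deriv_phi (γ B : ℝ) {x : ℝ} (hx : 0 < x) :
    HasDerivAt (fun y : ℝ => B - (B-1)*y^(γ-1) - ((Real.log y)^2 + 3*Real.log y + 1))
      ((B-1)*(1-γ)*x^(γ-2) - (2*Real.log x + 3)/x) x := by
  have hr : HasDerivAt (fun y : ℝ => y ^ (γ-1)) ((γ-1) * x ^ (γ-1-1)) x :=
    Real.hasDerivAt_rpow_const (Or.inl hx.ne')
  have hlog : HasDerivAt Real.log x⁻¹ x := Real.hasDerivAt_log hx.ne'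
  have hsq : HasDerivAt (fun y : ℝ => (Real.log y)^2) (((2:ℕ):ℝ) * Real.log x ^ (2-1) * x⁻¹) x :=
    hlog.pow 2
  have total := ((hasDerivAt_const x B).sub (hr.const_mul (B-1))).sub
    ((hsq.add (hlog.const_mul 3)).add_const 1)
  refine total.congr_deriv ?_
  rw [show γ - 1 - 1 = γ - 2 by ring]
  have hx' : x ≠ 0 := hx.ne'
  field_simp
  ring

private lemma aux_deriv_h2 (γ B : ℝ) (hγ : γ ≠ 0) {x : ℝ} (hx : 0 < x) :
    HasDerivAt (fun y : ℝ => B*(y-1) + ((B-1)/γ)*(1 - y^γ) - 2*y)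
      (B - (B-1)*x^(γ-1) - 2) x := by
  have hr : HasDerivAt (fun y : ℝ => y ^ γ) (γ * x ^ (γ-1)) x :=
    Real.hasDerivAt_rpow_const (Or.inl hx.ne')
  have hA : HasDerivAt (fun y : ℝ => B*(y-1)) (B * 1) x :=
    ((hasDerivAt_id x).sub_const 1).const_mul B
  have hB : HasDerivAt (fun y : ℝ => ((B-1)/γ)*(1 - y^γ)) (((B-1)/γ)*(0 - γ*x^(γ-1))) x :=
    ((hasDerivAt_const x (1:ℝ)).sub hr).const_mul ((B-1)/γ)
  have hC : HasDerivAt (fun y : ℝ => 2*y) ((2:ℝ) * 1) x := (hasDerivAt_id x).const_mul 2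
  have total := (hA.add hB).sub hC
  refine total.congr_deriv ?_
  field_simp
  ring

theorem stmt_0 (γ : ℝ) (hγ : γ ∈ Set.Ioo (0:ℝ) 1) :
    ∃ B : ℝ, 1 < B ∧ ∀ x : ℝ, 0 < x →
      x * min (Real.log x) 1 + x * (min (Real.log x) 1) ^ 2 ≤
        B * (x - 1) + ((B - 1) / γ) * (1 - x ^ γ) := by
  obtain ⟨hγ0, hγ1⟩ := hγ
  have hγ0' : γ ≠ 0 := hγ0.ne'
  have hc : (0:ℝ) < 1 - γ := by linarith
  obtain ⟨E, hEdef⟩ : ∃ E : ℝ, E = Real.exp (γ - 1) := ⟨_, rfl⟩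
  have hE0 : 0 < E := hEdef ▸ Real.exp_pos _
  have hE1 : E < 1 := hEdef ▸ Real.exp_lt_one_iff.mpr (by linarith)
  have he3 : Real.exp 1 < 3 := by
    have := Real.exp_one_lt_d9; linarith
  have he1 : (1:ℝ) < Real.exp 1 := by
    have := Real.exp_one_gt_d9; linarith
  have hE3 : (1:ℝ)/3 ≤ E := by
    have h1 : Real.exp (-1) ≤ E := hEdef ▸ Real.exp_le_exp.mpr (by linarith)
    have h2 : Real.exp (-1) = 1 / Real.exp 1 := by
      rw [Real.exp_neg, one_div]
    have h3 : (1:ℝ)/3 ≤ 1 / Real.exp 1 :=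
      div_le_div_of_nonneg_left (by norm_num) (Real.exp_pos 1) he3.le
    linarith [h2 ▸ h1]
  have hEc : (0:ℝ) < 1 - E := by linarith
  obtain ⟨B, hBdef⟩ : ∃ B : ℝ, B = 1 + 15/(1-γ) + 2/(1-E) := ⟨_, rfl⟩
  have hq1 : 0 < 15/(1-γ) := by positivity
  have hq2 : 0 < 2/(1-E) := by positivity
  have hB1 : 1 < B := by rw [hBdef]; linarith
  have hB15 : 15 ≤ (B-1)*(1-γ) := by
    have h : 15/(1-γ) ≤ B - 1 := by rw [hBdef]; linarith
    calc (15:ℝ) = 15/(1-γ) * (1-γ) := by field_simp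
    _ ≤ (B-1)*(1-γ) := by nlinarith
  have hB2 : 2 ≤ (B-1)*(1-E) := by
    have h : 2/(1-E) ≤ B - 1 := by rw [hBdef]; linarith
    calc (2:ℝ) = 2/(1-E) * (1-E) := by field_simp
    _ ≤ (B-1)*(1-E) := by nlinarith
  refine ⟨B, hB1, ?_⟩
  obtain ⟨g, hgdef⟩ : ∃ g : ℝ → ℝ, g = fun y =>
      B*(y-1) + ((B-1)/γ)*(1 - y^γ) - (y*Real.log y + y*(Real.log y)^2) := ⟨_, rfl⟩
  obtain ⟨φ, hφdef⟩ : ∃ φ : ℝ → ℝ, φ = fun y =>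
      B - (B-1)*y^(γ-1) - ((Real.log y)^2 + 3*Real.log y + 1) := ⟨_, rfl⟩
  have hφ1 : φ 1 = 0 := by
    simp only [hφdef, Real.one_rpow, Real.log_one]; ring
  have hg1 : g 1 = 0 := by
    simp only [hgdef, Real.one_rpow, Real.log_one]; ring
  -- ψ ≥ 0 on (0, e]
  have hψ : ∀ y : ℝ, 0 < y → y ≤ Real.exp 1 →
      0 ≤ (B-1)*(1-γ)*y^(γ-2) - (2*Real.log y + 3)/y := by
    intro y hy hye
    rcases le_or_gt (2*Real.log y + 3) 0 with h | h
    · have h1 : 0 ≤ (B-1)*(1-γ)*y^(γ-2) := by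
        have := Real.rpow_pos_of_pos hy (γ-2)
        nlinarith
      have h2 : (2*Real.log y + 3)/y ≤ 0 := div_nonpos_iff.mpr (Or.inr ⟨h, hy.le⟩)
      linarith
    · have hly : Real.log y ≤ 1 := (Real.log_le_iff_le_exp hy).mpr hye
      have h5 : 2*Real.log y + 3 ≤ 5 := by linarith
      have hyE : E ≤ y^(γ-1) := by
        have := Real.rpow_le_rpow_of_nonpos hy hye (by linarith : γ - 1 ≤ 0)
        rw [Real.exp_one_rpow] at this
        exact hEdef ▸ this
      have key : 5 ≤ (B-1)*(1-γ)*y^(γ-1) := by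
        have hp : 15*(1/3:ℝ) ≤ ((B-1)*(1-γ))*E :=
          mul_le_mul hB15 hE3 (by norm_num) (by linarith)
        have h0 : 0 < y^(γ-1) := Real.rpow_pos_of_pos hy _
        nlinarith
      have hsplit : y^(γ-2) = y^(γ-1)/y := by
        rw [show γ - 2 = (γ-1) - 1 by ring, Real.rpow_sub hy, Real.rpow_one]
      have h9 : (B-1)*(1-γ)*y^(γ-2) - (2*Real.log y + 3)/y
          = ((B-1)*(1-γ)*y^(γ-1) - (2*Real.log y + 3))/y := by
        rw [hsplit]; field_simp
      rw [h9]
      apply div_nonneg (by linarith) hy.le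
  -- φ is monotone on [a,b] ⊆ (0, e]
  have hφmono : ∀ a b : ℝ, 0 < a → b ≤ Real.exp 1 → MonotoneOn φ (Icc a b) := by
    intro a b ha hb
    rw [hφdef]
    apply monotoneOn_of_hasDerivWithinAt_nonneg (f' := fun y =>
        (B-1)*(1-γ)*y^(γ-2) - (2*Real.log y + 3)/y) (convex_Icc a b)
    · intro y hy
      have hy0 : 0 < y := lt_of_lt_of_le ha hy.1
      exact (aux_deriv_phi γ B hy0).continuousAt.continuousWithinAt
    · intro y hy
      rw [interior_Icc] at hy
      have hy0 : 0 < y := lt_trans ha hy.1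
      exact (aux_deriv_phi γ B hy0).hasDerivWithinAt
    · intro y hy
      rw [interior_Icc] at hy
      have hy0 : 0 < y := lt_trans ha hy.1
      exact hψ y hy0 (le_trans hy.2.le hb)
  -- sign of φ
  have hφnonneg : ∀ y : ℝ, 1 ≤ y → y ≤ Real.exp 1 → 0 ≤ φ y := by
    intro y h1 h2
    have := hφmono 1 y one_pos h2 (left_mem_Icc.mpr h1) (right_mem_Icc.mpr h1) h1
    rwa [hφ1] at this
  have hφnonpos : ∀ y : ℝ, 0 < y → y ≤ 1 → φ y ≤ 0 := by
    intro y h1 h2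
    have := hφmono y 1 h1 he1.le (left_mem_Icc.mpr h2) (right_mem_Icc.mpr h2) h2
    rwa [hφ1] at this
  have hgφ : ∀ y : ℝ, 0 < y → HasDerivAt g (φ y) y := by
    intro y hy
    rw [hgdef, hφdef]
    exact aux_deriv_g γ B hγ0' hy
  -- key : g ≥ 0 on (0, e]
  have hkey : ∀ x : ℝ, 0 < x → x ≤ Real.exp 1 → 0 ≤ g x := by
    intro x hx hxe
    rcases le_total x 1 with h | h
    · have hmono : AntitoneOn g (Icc x 1) := by
        apply antitoneOn_of_hasDerivWithinAt_nonpos (f' := φ) (convex_Icc x 1)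
        · intro y hy
          exact (hgφ y (lt_of_lt_of_le hx hy.1)).continuousAt.continuousWithinAt
        · intro y hy
          rw [interior_Icc] at hy
          exact (hgφ y (lt_trans hx hy.1)).hasDerivWithinAt
        · intro y hy
          rw [interior_Icc] at hy
          exact hφnonpos y (lt_trans hx hy.1) hy.2.le
      have := hmono (left_mem_Icc.mpr h) (right_mem_Icc.mpr h) h
      rwa [hg1] at this
    · have hmono : MonotoneOn g (Icc 1 x) := by
        apply monotoneOn_of_hasDerivWithinAt_nonneg (f' := φ) (convex_Icc 1 x)
        · intro y hy
          exact (hgφ y (lt_of_lt_of_le one_pos hy.1)).continuousAt.continuousWithinAt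
        · intro y hy
          rw [interior_Icc] at hy
          exact (hgφ y (lt_trans one_pos hy.1)).hasDerivWithinAt
        · intro y hy
          rw [interior_Icc] at hy
          exact hφnonneg y hy.1.le (le_trans hy.2.le hxe)
      have := hmono (left_mem_Icc.mpr h) (right_mem_Icc.mpr h) h
      rwa [hg1] at this
  -- main
  intro x hx
  rcases le_total x (Real.exp 1) with hxe | hxe
  · have hlx : Real.log x ≤ 1 := (Real.log_le_iff_le_exp hx).mpr hxe
    rw [min_eq_left hlx]
    have h0 := hkey x hx hxe
    rw [hgdef] at h0
    simp only at h0
    linarith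
  · have hlx : (1:ℝ) ≤ Real.log x := by
      rw [Real.le_log_iff_exp_le hx]; exact hxe
    rw [min_eq_right hlx]
    obtain ⟨k, hkdef⟩ : ∃ k : ℝ → ℝ, k = fun y =>
        B*(y-1) + ((B-1)/γ)*(1 - y^γ) - 2*y := ⟨_, rfl⟩
    have hke : 0 ≤ k (Real.exp 1) := by
      have h0 := hkey (Real.exp 1) (Real.exp_pos 1) le_rfl
      rw [hgdef] at h0
      simp only [Real.log_exp, one_pow, mul_one] at h0
      rw [hkdef]
      simp only
      linarith
    have hmono : MonotoneOn k (Icc (Real.exp 1) x) := by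
      rw [hkdef]
      apply monotoneOn_of_hasDerivWithinAt_nonneg (f' := fun y => B - (B-1)*y^(γ-1) - 2)
        (convex_Icc _ _)
      · intro y hy
        have hy0 : 0 < y := lt_of_lt_of_le (Real.exp_pos 1) hy.1
        exact (aux_deriv_h2 γ B hγ0' hy0).continuousAt.continuousWithinAt
      · intro y hy
        rw [interior_Icc] at hy
        have hy0 : 0 < y := lt_trans (Real.exp_pos 1) hy.1
        exact (aux_deriv_h2 γ B hγ0' hy0).hasDerivWithinAt
      · intro y hy
        rw [interior_Icc] at hy
        have hy0 : 0 < y := lt_trans (Real.exp_pos 1) hy.1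
        have hyE : y^(γ-1) ≤ E := by
          have := Real.rpow_le_rpow_of_nonpos (Real.exp_pos 1) hy.1.le
            (by linarith : γ - 1 ≤ 0)
          rw [Real.exp_one_rpow] at this
          exact hEdef ▸ this
        nlinarith [mul_le_mul_of_nonneg_left hyE (by linarith : (0:ℝ) ≤ B - 1)]
    have hle := hmono (left_mem_Icc.mpr hxe) (right_mem_Icc.mpr hxe) hxe
    have h0 : 0 ≤ k x := le_trans hke hle
    rw [hkdef] at h0
    simp only at h0
    norm_num
    linarith
end

section
/- For every α ∈ (−1,1) and every β > 0, the function x ↦ ((1−α)/2)·β + ((1+α)/2)·x − β^((1−α)/2)·x^((1+α)/2) is decreasing (antitone) on the interval [0, β/e]. -/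
theorem stmt_2 (α β : ℝ) (hα : α ∈ Set.Ioo (-1:ℝ) 1) (hβ : 0 < β) :
    AntitoneOn (fun x : ℝ =>
        ((1 - α) / 2) * β + ((1 + α) / 2) * x - β ^ ((1 - α) / 2) * x ^ ((1 + α) / 2))
      (Set.Icc 0 (β / Real.exp 1)) := by
  obtain ⟨hα1, hα2⟩ := hα
  set p : ℝ := (1 + α) / 2 with hp
  have hp0 : 0 < p := by rw [hp]; linarith
  have hp1 : p < 1 := by rw [hp]; linarith
  have hq : (1 - α) / 2 = 1 - p := by rw [hp]; ring
  have he1 : (1:ℝ) ≤ Real.exp 1 := by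
    have := Real.add_one_le_exp (1:ℝ); linarith
  apply antitoneOn_of_deriv_nonpos (convex_Icc _ _)
  · have hc : Continuous fun x : ℝ => x ^ ((1 + α) / 2) := by
      apply continuous_iff_continuousAt.mpr
      intro x
      exact Real.continuousAt_rpow_const x _ (Or.inr hp0.le)
    exact (Continuous.continuousOn (by continuity))
  · rw [interior_Icc]
    intro x hx
    have h1 : HasDerivAt (fun x : ℝ => x ^ ((1 + α) / 2)) (p * x ^ (p - 1)) x :=
      Real.hasDerivAt_rpow_const (Or.inl hx.1.ne')
    have hf := ((hasDerivAt_const x (((1 - α) / 2) * β)).add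
        ((hasDerivAt_id x).const_mul ((1 + α) / 2))).sub
        (h1.const_mul (β ^ ((1 - α) / 2)))
    exact hf.differentiableAt.differentiableWithinAt
  · rw [interior_Icc]
    intro x hx
    have h1 : HasDerivAt (fun x : ℝ => x ^ ((1 + α) / 2)) (p * x ^ (p - 1)) x :=
      Real.hasDerivAt_rpow_const (Or.inl hx.1.ne')
    have hf := ((hasDerivAt_const x (((1 - α) / 2) * β)).add
        ((hasDerivAt_id x).const_mul ((1 + α) / 2))).sub
        (h1.const_mul (β ^ ((1 - α) / 2)))
    simp only [id_eq] at hf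
    rw [show deriv (fun x : ℝ => (1 - α) / 2 * β + p * x - β ^ ((1 - α) / 2) * x ^ p) x = _ from hf.deriv]
    have hx0 : 0 < x := hx.1
    have hxb : x ≤ β := le_trans hx.2.le (by
      rw [div_le_iff₀ (by positivity)]
      nlinarith)
    have hkey : (1:ℝ) ≤ β ^ ((1 - α) / 2) * x ^ (p - 1) := by
      have h2 : β ^ ((1 - α) / 2) * x ^ (p - 1) = (β / x) ^ (1 - p) := by
        rw [hq, Real.div_rpow hβ.le hx0.le, div_eq_mul_inv, ← Real.rpow_neg hx0.le]
        ring_nf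
      rw [h2]
      apply Real.one_le_rpow
      · rw [le_div_iff₀ hx0]; linarith
      · linarith
    have : p * 1 ≤ β ^ ((1 - α) / 2) * (p * x ^ (p - 1)) := by
      have := mul_le_mul_of_nonneg_left hkey hp0.le
      nlinarith
    simp only [mul_one, hp] at this ⊢
    linarith
end

section
/- For each α ∈ (−1,1) there exists a constant C > 0, depending only on α, such that for any probability measure Q on Ω and any nonnegative measurable densities β¹, β² with ∫β¹dQ = ∫β²dQ = 1, one has P¹{ω : β¹(ω) > e·β²(ω)} ≤ C · D^{(α)}(P¹ ∥ P²), where P¹ is the measure with density β¹ w.r.t. Q, P¹(E) = ∫_E β¹ dQ, and D^{(α)}(P¹∥P²) = (4/(1−α²))(1 − ∫(β¹)^{(1−α)/2}(β²)^{(1+α)/2}dQ). One may take C = ((1−α²)/4)·(((1−α)/2) + ((1+α)/2)e^{−1} − e^{−(1+α)/2})^{−1}. -/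
open MeasureTheory Real

private lemma key_rpow {s t u : ℝ} (hs0 : 0 < s) (hs1 : s < 1)
    (ht : 0 ≤ t) (htu : t ≤ u) (hu1 : u ≤ 1) (hu0 : 0 < u) :
    t ^ s - s * t ≤ u ^ s - s * u := by
  have htu' : 0 ≤ t / u := div_nonneg ht hu0.le
  have h1 : (1:ℝ) ^ (1 - s) * (t / u) ^ s ≤ (1 - s) * 1 + s * (t / u) :=
    Real.geom_mean_le_arith_mean2_weighted (by linarith) hs0.le (by norm_num) htu' (by ring)
  rw [Real.one_rpow, one_mul] at h1
  have hts : t ^ s = u ^ s * (t / u) ^ s := by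
    rw [← Real.mul_rpow hu0.le htu', mul_div_cancel₀ _ hu0.ne']
  have hus : (0:ℝ) < u ^ s := Real.rpow_pos_of_pos hu0 s
  have h2 : t ^ s ≤ u ^ s * ((1 - s) + s * (t / u)) := by
    rw [hts]
    exact mul_le_mul_of_nonneg_left (by linarith) hus.le
  have hpow : (1:ℝ) ≤ u ^ (s - 1) :=
    Real.one_le_rpow_of_pos_of_le_one_of_nonpos hu0 hu1 (by linarith)
  have hid : u ^ (s - 1) * u = u ^ s := by
    rw [← Real.rpow_add_one hu0.ne']; norm_num
  have h3 : u ^ s * (t / u) = u ^ (s - 1) * t := by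
    field_simp
    nlinarith [hid]
  nlinarith [mul_le_mul_of_nonneg_right hpow (mul_nonneg hs0.le (sub_nonneg.2 htu))]

theorem stmt_12 (α : ℝ) (hα : α ∈ Set.Ioo (-1:ℝ) 1) :
    ∃ C : ℝ, 0 < C ∧
      C = ((1 - α ^ 2) / 4) *
        ((1 - α) / 2 + ((1 + α) / 2) * Real.exp (-1) - Real.exp (-(1 + α) / 2))⁻¹ ∧
      ∀ (Ω : Type) (_ : MeasurableSpace Ω) (Q : Measure Ω), IsProbabilityMeasure Q →
        ∀ (β₁ β₂ : Ω → ℝ), Measurable β₁ → Measurable β₂ →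
          (∀ ω, 0 ≤ β₁ ω) → (∀ ω, 0 ≤ β₂ ω) →
          (∫ ω, β₁ ω ∂Q) = 1 → (∫ ω, β₂ ω ∂Q) = 1 →
          (∫ ω in {ω | β₁ ω > Real.exp 1 * β₂ ω}, β₁ ω ∂Q) ≤
            C * ((4 / (1 - α ^ 2)) *
              (1 - ∫ ω, (β₁ ω) ^ ((1 - α) / 2) * (β₂ ω) ^ ((1 + α) / 2) ∂Q)) := by
  obtain ⟨hα1, hα2⟩ := hα
  set γ : ℝ := (1 - α) / 2 with hγdef
  set s : ℝ := (1 + α) / 2 with hsdef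
  have hγ0 : 0 < γ := by simp [hγdef]; linarith
  have hs0 : 0 < s := by simp [hsdef]; linarith
  have hs1 : s < 1 := by simp [hsdef]; linarith
  have hγs : γ + s = 1 := by simp [hγdef, hsdef]; ring
  set κ : ℝ := γ + s * Real.exp (-1) - Real.exp (-(1 + α) / 2) with hκdef
  -- κ > 0 by strict convexity of exp
  have hκ0 : 0 < κ := by
    have := strictConvexOn_exp.2 (Set.mem_univ (0:ℝ)) (Set.mem_univ (-1:ℝ))
      (by norm_num) hγ0 hs0 hγs
    simp only [smul_eq_mul, mul_zero, zero_add, Real.exp_zero, mul_one, mul_neg] at this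
    have he : γ * 0 + s * (-1) = -(1 + α) / 2 := by simp [hγdef, hsdef]; ring
    have : Real.exp (-(1 + α) / 2) < γ + s * Real.exp (-1) := by
      rw [← he]; simpa using this
    simp only [hκdef]
    linarith
  have hsq : 1 - α ^ 2 > 0 := by nlinarith
  refine ⟨((1 - α ^ 2) / 4) * κ⁻¹, by positivity, rfl, ?_⟩
  intro Ω mΩ Q hQ β₁ β₂ hβ₁ hβ₂ hb₁ hb₂ h1 h2
  set u : ℝ := Real.exp (-1) with hudef
  have hu0 : 0 < u := Real.exp_pos _
  have hu1 : u ≤ 1 := by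
    rw [hudef, ← Real.exp_zero]
    exact Real.exp_le_exp.2 (by norm_num)
  have hue : u ^ s = Real.exp (-(1 + α) / 2) := by
    rw [hudef, ← Real.exp_mul]
    congr 1
    rw [hsdef]; ring
  -- integrability
  have hInt1 : Integrable β₁ Q := by
    by_contra h
    rw [integral_undef h] at h1; norm_num at h1
  have hInt2 : Integrable β₂ Q := by
    by_contra h
    rw [integral_undef h] at h2; norm_num at h2
  set g : Ω → ℝ := fun ω => (β₁ ω) ^ γ * (β₂ ω) ^ s with hgdef
  have hgm : Measurable g := (hβ₁.pow_const γ).mul (hβ₂.pow_const s)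
  have hgle : ∀ ω, g ω ≤ γ * β₁ ω + s * β₂ ω := fun ω =>
    Real.geom_mean_le_arith_mean2_weighted hγ0.le hs0.le (hb₁ ω) (hb₂ ω) hγs
  have hg0 : ∀ ω, 0 ≤ g ω := fun ω =>
    mul_nonneg (Real.rpow_nonneg (hb₁ ω) _) (Real.rpow_nonneg (hb₂ ω) _)
  have hIntbd : Integrable (fun ω => γ * β₁ ω + s * β₂ ω) Q :=
    (hInt1.const_mul γ).add (hInt2.const_mul s)
  have hIntg : Integrable g Q := by
    refine hIntbd.mono' hgm.aestronglyMeasurable (ae_of_all _ fun ω => ?_)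
    rw [Real.norm_eq_abs, abs_of_nonneg (hg0 ω)]
    exact hgle ω
  set f : Ω → ℝ := fun ω => γ * β₁ ω + s * β₂ ω - g ω with hfdef
  have hIntf : Integrable f Q := hIntbd.sub hIntg
  have hf0 : ∀ ω, 0 ≤ f ω := fun ω => sub_nonneg.2 (hgle ω)
  have hIf : ∫ ω, f ω ∂Q = 1 - ∫ ω, g ω ∂Q := by
    rw [hfdef]
    rw [integral_sub hIntbd hIntg, integral_add (hInt1.const_mul γ) (hInt2.const_mul s),
      integral_const_mul, integral_const_mul, h1, h2]
    linarith [hγs]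
  set A : Set Ω := {ω | β₁ ω > Real.exp 1 * β₂ ω} with hAdef
  have hA : MeasurableSet A := measurableSet_lt (measurable_const.mul hβ₂) hβ₁
  -- pointwise bound on A
  have hptwise : ∀ ω ∈ A, κ * β₁ ω ≤ f ω := by
    intro ω hω
    have hab : Real.exp 1 * β₂ ω < β₁ ω := hω
    have ha : 0 < β₁ ω := lt_of_le_of_lt (mul_nonneg (Real.exp_pos 1).le (hb₂ ω)) hab
    set a := β₁ ω with hadef
    set b := β₂ ω with hbdef
    set t : ℝ := b / a with htdef
    have ht0 : 0 ≤ t := div_nonneg (hb₂ ω) ha.le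
    have htu : t ≤ u := by
      rw [htdef, div_le_iff₀ ha]
      have h3 : Real.exp 1 * u = 1 := by
        rw [hudef, ← Real.exp_add]; norm_num
      nlinarith [Real.exp_pos (1:ℝ), hab]
    have hkey := key_rpow hs0 hs1 ht0 htu hu1 hu0
    have hbt : b = a * t := by rw [htdef, mul_div_cancel₀ _ ha.ne']
    have hgw : g ω = a * t ^ s := by
      rw [hgdef]
      simp only
      rw [← hadef, ← hbdef, hbt, Real.mul_rpow ha.le ht0, ← mul_assoc,
        ← Real.rpow_add ha, hγs, Real.rpow_one]
    have hfw : f ω = a * (γ + s * t - t ^ s) := by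
      rw [hfdef]; simp only
      rw [← hadef, ← hbdef, hgw, hbt]; ring
    rw [hfw]
    have hκle : κ ≤ γ + s * t - t ^ s := by
      rw [hκdef, ← hue]; linarith
    nlinarith [hκle, ha.le]
  -- integral bound
  have hstep1 : κ * ∫ ω in A, β₁ ω ∂Q ≤ ∫ ω in A, f ω ∂Q := by
    rw [← integral_const_mul]
    exact setIntegral_mono_on ((hInt1.const_mul κ).restrict) (hIntf.restrict) hA hptwise
  have hstep2 : ∫ ω in A, f ω ∂Q ≤ ∫ ω, f ω ∂Q :=
    setIntegral_le_integral hIntf (ae_of_all _ hf0)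
  have hfinal : κ * ∫ ω in A, β₁ ω ∂Q ≤ 1 - ∫ ω, g ω ∂Q := by
    rw [← hIf]; linarith
  have hCsimp : ((1 - α ^ 2) / 4) * κ⁻¹ * ((4 / (1 - α ^ 2)) *
      (1 - ∫ ω, (β₁ ω) ^ ((1 - α) / 2) * (β₂ ω) ^ ((1 + α) / 2) ∂Q))
      = κ⁻¹ * (1 - ∫ ω, g ω ∂Q) := by
    rw [hgdef]
    field_simp
    ring
  rw [hCsimp]
  rw [le_inv_mul_iff₀ hκ0]
  exact hfinal
end

section
/- Let Q be a probability measure, β¹, β² nonnegative measurable densities with ∫β¹dQ = ∫β²dQ = 1, and α ∈ (−1,1) with Hellinger integral H := ∫(β¹)^{(1−α)/2}(β²)^{(1+α)/2}dQ > 0. Define f¹ := (β²/β¹)^{(1+α)/2}/H and f² := (β¹/β²)^{(1−α)/2}/H (with 0/0 := 1). Then ∫f¹·β¹ dQ = 1, ∫f²·β² dQ = 1, and pointwise on {β¹ > 0, β² > 0}, (f¹)^{2/(1+α)}·(f²)^{2/(1−α)} = exp(D^{[α]}), where D^{[α]} := (4/(α²−1))·ln H. -/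
open MeasureTheory

theorem stmt_13 {Ω : Type*} [MeasurableSpace Ω] (Q : Measure Ω) [IsProbabilityMeasure Q]
    (β₁ β₂ : Ω → ℝ) (hm₁ : Measurable β₁) (hm₂ : Measurable β₂)
    (h₁ : ∀ ω, 0 ≤ β₁ ω) (h₂ : ∀ ω, 0 ≤ β₂ ω)
    (hi₁ : ∫ ω, β₁ ω ∂Q = 1) (hi₂ : ∫ ω, β₂ ω ∂Q = 1)
    (α : ℝ) (hα : α ∈ Set.Ioo (-1:ℝ) 1)
    (hint : Integrable (fun ω => (β₁ ω) ^ ((1 - α) / 2) * (β₂ ω) ^ ((1 + α) / 2)) Q)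
    (H : ℝ) (hH : H = ∫ ω, (β₁ ω) ^ ((1 - α) / 2) * (β₂ ω) ^ ((1 + α) / 2) ∂Q)
    (hHpos : 0 < H)
    (f₁ f₂ : Ω → ℝ)
    (hf₁ : f₁ = fun ω =>
      (if β₁ ω = 0 ∧ β₂ ω = 0 then 1 else β₂ ω / β₁ ω) ^ ((1 + α) / 2) / H)
    (hf₂ : f₂ = fun ω =>
      (if β₁ ω = 0 ∧ β₂ ω = 0 then 1 else β₁ ω / β₂ ω) ^ ((1 - α) / 2) / H) :
    (∫ ω, f₁ ω * β₁ ω ∂Q) = 1 ∧ (∫ ω, f₂ ω * β₂ ω ∂Q) = 1 ∧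
      ∀ ω, 0 < β₁ ω → 0 < β₂ ω →
        (f₁ ω) ^ (2 / (1 + α)) * (f₂ ω) ^ (2 / (1 - α)) =
          Real.exp ((4 / (α ^ 2 - 1)) * Real.log H) := by
  obtain ⟨hαl, hαr⟩ := hα
  have hp : (0:ℝ) < (1 + α) / 2 := by linarith
  have hq : (0:ℝ) < (1 - α) / 2 := by linarith
  have key₁ : ∀ ω, f₁ ω * β₁ ω =
      (β₁ ω) ^ ((1 - α) / 2) * (β₂ ω) ^ ((1 + α) / 2) / H := by
    intro ω
    subst hf₁
    simp only
    rcases (h₁ ω).eq_or_lt with h | h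
    · rw [← h]
      simp [Real.zero_rpow hq.ne']
    · have hne : ¬(β₁ ω = 0 ∧ β₂ ω = 0) := by
        rintro ⟨h0, -⟩; exact h.ne' h0
      have hb : (β₁ ω) ^ ((1 - α) / 2) = β₁ ω / (β₁ ω) ^ ((1 + α) / 2) := by
        rw [eq_div_iff (Real.rpow_pos_of_pos h _).ne', ← Real.rpow_add h,
          show (1 - α) / 2 + (1 + α) / 2 = 1 by ring, Real.rpow_one]
      rw [if_neg hne, Real.div_rpow (h₂ ω) (h₁ ω), hb]
      ring
  have key₂ : ∀ ω, f₂ ω * β₂ ω =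
      (β₁ ω) ^ ((1 - α) / 2) * (β₂ ω) ^ ((1 + α) / 2) / H := by
    intro ω
    subst hf₂
    simp only
    rcases (h₂ ω).eq_or_lt with h | h
    · rw [← h]
      simp [Real.zero_rpow hp.ne']
    · have hne : ¬(β₁ ω = 0 ∧ β₂ ω = 0) := by
        rintro ⟨-, h0⟩; exact h.ne' h0
      have hb : (β₂ ω) ^ ((1 + α) / 2) = β₂ ω / (β₂ ω) ^ ((1 - α) / 2) := by
        rw [eq_div_iff (Real.rpow_pos_of_pos h _).ne', ← Real.rpow_add h,
          show (1 + α) / 2 + (1 - α) / 2 = 1 by ring, Real.rpow_one]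
      rw [if_neg hne, Real.div_rpow (h₁ ω) (h₂ ω), hb]
      ring
  have hI : (∫ ω, (β₁ ω) ^ ((1 - α) / 2) * (β₂ ω) ^ ((1 + α) / 2) / H ∂Q) = 1 := by
    rw [integral_div, ← hH, div_self hHpos.ne']
  refine ⟨by rw [show (fun ω => f₁ ω * β₁ ω) = _ from funext key₁] at *; exact hI,
          by rw [show (fun ω => f₂ ω * β₂ ω) = _ from funext key₂] at *; exact hI, ?_⟩
  intro ω hb₁ hb₂
  subst hf₁ hf₂
  simp only
  have hne : ¬(β₁ ω = 0 ∧ β₂ ω = 0) := by rintro ⟨h0, -⟩; exact hb₁.ne' h0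
  rw [if_neg hne, if_neg hne]
  have hd₁ : (0:ℝ) < β₂ ω / β₁ ω := div_pos hb₂ hb₁
  have hd₂ : (0:ℝ) < β₁ ω / β₂ ω := div_pos hb₁ hb₂
  rw [Real.div_rpow (Real.rpow_nonneg hd₁.le _) hHpos.le,
      Real.div_rpow (Real.rpow_nonneg hd₂.le _) hHpos.le,
      ← Real.rpow_mul hd₁.le, ← Real.rpow_mul hd₂.le]
  have ha1 : (1 + α) ≠ 0 := by linarith
  have ha2 : (1 - α) ≠ 0 := by linarith
  have e₁ : (1 + α) / 2 * (2 / (1 + α)) = 1 := by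
    field_simp
  have e₂ : (1 - α) / 2 * (2 / (1 - α)) = 1 := by
    field_simp
  rw [e₁, e₂, Real.rpow_one, Real.rpow_one, div_mul_div_comm]
  have h1 : β₂ ω / β₁ ω * (β₁ ω / β₂ ω) = 1 := by
    field_simp
  rw [h1, ← Real.rpow_add hHpos, one_div, ← Real.rpow_neg hHpos.le,
      Real.rpow_def_of_pos hHpos]
  congr 1
  have ha3 : α ^ 2 - 1 ≠ 0 := by nlinarith
  field_simp
  ring
end

section
/- Let c > 1 and ε ∈ (0,1). If β¹, β² are positive measurable densities w.r.t. a probability measure Q with ∫β¹dQ = ∫β²dQ = 1 and 1/c ≤ β²/β¹ ≤ c pointwise, then ∫(β²/β¹)^ε β¹ dQ ≤ 1 − ε·D^{(−1)}(P¹∥P²) + (ε²/2)·c^ε·(ln c)², where D^{(−1)}(P¹∥P²) := ∫ ln(β¹/β²)·β¹ dQ is the Kullback–Leibler divergence. -/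
open MeasureTheory intervalIntegral

lemma exp_quad_bound {x B : ℝ} (hB : 0 ≤ B) (hx : |x| ≤ B) :
    Real.exp x ≤ 1 + x + x ^ 2 / 2 * Real.exp B := by
  have hxB := abs_le.mp hx
  have hexpB : (1:ℝ) ≤ Real.exp B := by simpa using Real.exp_le_exp.mpr hB
  rcases le_or_gt 0 x with hx0 | hx0
  · have h1 : ∫ t in (0:ℝ)..x, (Real.exp t - 1) = Real.exp x - 1 - x := by
      rw [intervalIntegral.integral_sub intervalIntegrable_exp intervalIntegrable_const]
      simp [integral_exp]
    have h2 : ∫ t in (0:ℝ)..x, t * Real.exp B = x ^ 2 / 2 * Real.exp B := by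
      rw [intervalIntegral.integral_mul_const, integral_id]
      ring
    have hmono : (∫ t in (0:ℝ)..x, (Real.exp t - 1)) ≤ ∫ t in (0:ℝ)..x, t * Real.exp B := by
      apply intervalIntegral.integral_mono_on hx0
        (intervalIntegrable_exp.sub intervalIntegrable_const)
        (intervalIntegrable_id.mul_const _)
      intro t ht
      have ht0 : 0 ≤ t := ht.1
      have htB : Real.exp t ≤ Real.exp B := Real.exp_le_exp.mpr (ht.2.trans hxB.2)
      have key : Real.exp t * (-t + 1) ≤ 1 := by
        have := mul_le_mul_of_nonneg_left (Real.add_one_le_exp (-t)) (Real.exp_pos t).le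
        calc Real.exp t * (-t + 1) ≤ Real.exp t * Real.exp (-t) := this
          _ = 1 := by rw [← Real.exp_add]; simp
      nlinarith [Real.exp_pos t]
    rw [h1, h2] at hmono
    linarith
  · have h1 : ∫ t in x..(0:ℝ), ((1:ℝ) - Real.exp t) = Real.exp x - 1 - x := by
      rw [intervalIntegral.integral_sub intervalIntegrable_const intervalIntegrable_exp]
      simp [integral_exp]
      ring
    have h2 : ∫ t in x..(0:ℝ), (-t) = x ^ 2 / 2 := by
      rw [intervalIntegral.integral_neg, integral_id]
      ring
    have hmono : (∫ t in x..(0:ℝ), ((1:ℝ) - Real.exp t)) ≤ ∫ t in x..(0:ℝ), (-t) := by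
      apply intervalIntegral.integral_mono_on hx0.le
        (intervalIntegrable_const.sub intervalIntegrable_exp)
        intervalIntegrable_id.neg
      intro t _
      simp only [Pi.neg_apply]
      linarith [Real.add_one_le_exp t]
    rw [h1, h2] at hmono
    nlinarith [sq_nonneg x]

theorem stmt_14 {Ω : Type*} [MeasurableSpace Ω] (Q : Measure Ω) [IsProbabilityMeasure Q]
    (β₁ β₂ : Ω → ℝ) (hm₁ : Measurable β₁) (hm₂ : Measurable β₂)
    (h₁ : ∀ ω, 0 < β₁ ω) (h₂ : ∀ ω, 0 < β₂ ω)
    (hi₁ : ∫ ω, β₁ ω ∂Q = 1) (hi₂ : ∫ ω, β₂ ω ∂Q = 1)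
    (c : ℝ) (hc : 1 < c) (ε : ℝ) (hε : ε ∈ Set.Ioo (0:ℝ) 1)
    (htimid : ∀ ω, 1 / c ≤ β₂ ω / β₁ ω ∧ β₂ ω / β₁ ω ≤ c) :
    (∫ ω, (β₂ ω / β₁ ω) ^ ε * β₁ ω ∂Q) ≤
      1 - ε * (∫ ω, Real.log (β₁ ω / β₂ ω) * β₁ ω ∂Q) +
        (ε ^ 2 / 2) * c ^ ε * (Real.log c) ^ 2 := by
  obtain ⟨hε0, hε1⟩ := hε
  have hc0 : 0 < c := lt_trans one_pos hc
  have hlogc : 0 < Real.log c := Real.log_pos hc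
  set K : ℝ := ε ^ 2 / 2 * c ^ ε * Real.log c ^ 2 with hK
  have hK0 : 0 ≤ K := by positivity
  -- r ω positive bounds
  have hr_pos : ∀ ω, 0 < β₂ ω / β₁ ω := fun ω => div_pos (h₂ ω) (h₁ ω)
  have hlog_abs : ∀ ω, |Real.log (β₂ ω / β₁ ω)| ≤ Real.log c := by
    intro ω
    rw [abs_le]
    constructor
    · have := Real.log_le_log (by positivity : (0:ℝ) < 1 / c) (htimid ω).1
      rwa [one_div, Real.log_inv] at this
    · exact Real.log_le_log (hr_pos ω) (htimid ω).2
  -- integrability of β₁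
  have hintβ₁ : Integrable β₁ Q := by
    by_contra h
    rw [integral_undef h] at hi₁
    norm_num at hi₁
  -- pointwise bound
  have hpt : ∀ ω, (β₂ ω / β₁ ω) ^ ε * β₁ ω ≤
      (1 + ε * Real.log (β₂ ω / β₁ ω) + K) * β₁ ω := by
    intro ω
    apply mul_le_mul_of_nonneg_right _ (h₁ ω).le
    set L := Real.log (β₂ ω / β₁ ω)
    have hx : |ε * L| ≤ ε * Real.log c := by
      rw [abs_mul, abs_of_pos hε0]
      exact mul_le_mul_of_nonneg_left (hlog_abs ω) hε0.le
    have hrw : (β₂ ω / β₁ ω) ^ ε = Real.exp (ε * L) := by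
      rw [Real.rpow_def_of_pos (hr_pos ω), mul_comm]
    have hbound := exp_quad_bound (by positivity : (0:ℝ) ≤ ε * Real.log c) hx
    have hce : Real.exp (ε * Real.log c) = c ^ ε := by
      rw [Real.rpow_def_of_pos hc0, mul_comm]
    rw [hce] at hbound
    have hsq : (ε * L) ^ 2 ≤ (ε * Real.log c) ^ 2 := by
      rw [← sq_abs (ε * L)]
      exact pow_le_pow_left₀ (abs_nonneg _) hx 2
    have hcε : (0:ℝ) < c ^ ε := by positivity
    rw [hrw]
    calc Real.exp (ε * L) ≤ 1 + ε * L + (ε * L) ^ 2 / 2 * c ^ ε := hbound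
      _ ≤ 1 + ε * L + (ε * Real.log c) ^ 2 / 2 * c ^ ε := by nlinarith
      _ = 1 + ε * L + K := by rw [hK]; ring
  -- integrability of both sides
  have hmr : Measurable fun ω => β₂ ω / β₁ ω := hm₂.div hm₁
  have hint_log : Integrable (fun ω => Real.log (β₂ ω / β₁ ω) * β₁ ω) Q := by
    apply Integrable.mono' (hintβ₁.const_mul (Real.log c))
      ((hmr.log.mul hm₁).aestronglyMeasurable)
    filter_upwards with ω
    rw [Pi.mul_apply, norm_mul, Real.norm_eq_abs, Real.norm_eq_abs, abs_of_pos (h₁ ω)]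
    exact mul_le_mul_of_nonneg_right (hlog_abs ω) (h₁ ω).le
  have hint_lhs : Integrable (fun ω => (β₂ ω / β₁ ω) ^ ε * β₁ ω) Q := by
    have hfeq : (fun ω => (β₂ ω / β₁ ω) ^ ε * β₁ ω)
        = fun ω => Real.exp (ε * Real.log (β₂ ω / β₁ ω)) * β₁ ω := by
      funext ω
      rw [Real.rpow_def_of_pos (hr_pos ω), mul_comm ε]
    rw [hfeq]
    apply Integrable.mono' (hintβ₁.const_mul (c ^ ε))
      (((Real.measurable_exp.comp (hmr.log.const_mul ε)).mul hm₁).aestronglyMeasurable)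
    filter_upwards with ω
    simp only [Pi.mul_apply, Function.comp_apply]
    rw [norm_mul, Real.norm_eq_abs, Real.norm_eq_abs, abs_of_pos (h₁ ω),
      abs_of_pos (Real.exp_pos _)]
    apply mul_le_mul_of_nonneg_right _ (h₁ ω).le
    rw [show Real.exp (ε * Real.log (β₂ ω / β₁ ω)) = (β₂ ω / β₁ ω) ^ ε from by
      rw [Real.rpow_def_of_pos (hr_pos ω), mul_comm ε]]
    exact Real.rpow_le_rpow (hr_pos ω).le (htimid ω).2 hε0.le
  have hint_rhs : Integrable (fun ω => (1 + ε * Real.log (β₂ ω / β₁ ω) + K) * β₁ ω) Q := by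
    have : (fun ω => (1 + ε * Real.log (β₂ ω / β₁ ω) + K) * β₁ ω)
        = fun ω => (1 + K) * β₁ ω + ε * (Real.log (β₂ ω / β₁ ω) * β₁ ω) := by
      funext ω; ring
    rw [this]
    exact (hintβ₁.const_mul _).add (hint_log.const_mul ε)
  -- integrate the pointwise bound
  have hmain : (∫ ω, (β₂ ω / β₁ ω) ^ ε * β₁ ω ∂Q) ≤
      ∫ ω, (1 + ε * Real.log (β₂ ω / β₁ ω) + K) * β₁ ω ∂Q :=
    integral_mono hint_lhs hint_rhs hpt
  have hsplit : (∫ ω, (1 + ε * Real.log (β₂ ω / β₁ ω) + K) * β₁ ω ∂Q)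
      = (1 + K) * 1 + ε * ∫ ω, Real.log (β₂ ω / β₁ ω) * β₁ ω ∂Q := by
    rw [show (fun ω => (1 + ε * Real.log (β₂ ω / β₁ ω) + K) * β₁ ω)
        = fun ω => (1 + K) * β₁ ω + ε * (Real.log (β₂ ω / β₁ ω) * β₁ ω) from by
      funext ω; ring]
    rw [integral_add (hintβ₁.const_mul _) (hint_log.const_mul ε),
      MeasureTheory.integral_const_mul, MeasureTheory.integral_const_mul, hi₁]
  have hneg : (∫ ω, Real.log (β₂ ω / β₁ ω) * β₁ ω ∂Q)
      = - ∫ ω, Real.log (β₁ ω / β₂ ω) * β₁ ω ∂Q := by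
    rw [← MeasureTheory.integral_neg]
    apply MeasureTheory.integral_congr_ae
    filter_upwards with ω
    rw [show Real.log (β₂ ω / β₁ ω) = -Real.log (β₁ ω / β₂ ω) from by
      rw [← Real.log_inv, inv_div]]
    ring
  rw [hsplit, hneg] at hmain
  linarith
end

section
/- Let c > 1 and ε ∈ (0,1). If β¹, β² are positive measurable densities w.r.t. a probability measure Q with ∫β¹dQ = ∫β²dQ = 1 and 1/c ≤ β²/β¹ ≤ c pointwise, then (−1/ε)·ln ∫(β²/β¹)^ε β¹ dQ ≥ D^{(−1)}(P¹∥P²) − (ε/2)·c^ε·(ln c)², where D^{(−1)}(P¹∥P²) := ∫ ln(β¹/β²)·β¹ dQ. -/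
open MeasureTheory

lemma aux1 {u : ℝ} (hu : u ≤ 0) : Real.exp u ≤ 1 + u + u ^ 2 / 2 := by
  have h : AntitoneOn (fun x : ℝ => 1 + x + x ^ 2 / 2 - Real.exp x) (Set.Iic 0) := by
    apply antitoneOn_of_deriv_nonpos (convex_Iic 0)
    · fun_prop
    · exact Differentiable.differentiableOn (by fun_prop)
    · intro x hx
      have H : HasDerivAt (fun x : ℝ => 1 + x + x ^ 2 / 2 - Real.exp x)
          (1 + x - Real.exp x) x := by
        have h1 : HasDerivAt (fun x : ℝ => x ^ 2 / 2) x x := by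
          simpa using (hasDerivAt_pow 2 x).div_const 2
        have h2 : HasDerivAt (fun x : ℝ => 1 + x) 1 x := (hasDerivAt_id x).const_add 1
        exact (h2.add h1).sub (Real.hasDerivAt_exp x)
      rw [H.deriv]
      have := Real.add_one_le_exp x
      linarith
  have := h (Set.mem_Iic.2 hu) (Set.mem_Iic.2 le_rfl) hu
  simp only [Real.exp_zero] at this
  nlinarith [this]

lemma aux2 {u : ℝ} (hu : u ≤ 0) : 1 - Real.exp u + u * Real.exp u ≤ u ^ 2 / 2 := by
  have h : AntitoneOn (fun x : ℝ => x ^ 2 / 2 - 1 + Real.exp x - x * Real.exp x) (Set.Iic 0) := by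
    apply antitoneOn_of_deriv_nonpos (convex_Iic 0)
    · fun_prop
    · exact Differentiable.differentiableOn (by fun_prop)
    · intro x hx
      have H : HasDerivAt (fun x : ℝ => x ^ 2 / 2 - 1 + Real.exp x - x * Real.exp x)
          (x - x * Real.exp x) x := by
        have h1 : HasDerivAt (fun x : ℝ => x ^ 2 / 2) x x := by
          simpa using (hasDerivAt_pow 2 x).div_const 2
        have h3 : HasDerivAt (fun x : ℝ => x * Real.exp x)
            (1 * Real.exp x + x * Real.exp x) x :=
          (hasDerivAt_id x).mul (Real.hasDerivAt_exp x)
        have := ((h1.sub_const 1).add (Real.hasDerivAt_exp x)).sub h3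
        exact this.congr_deriv (by ring)
      rw [H.deriv]
      have hx0 : x < 0 := by simpa using hx
      have : Real.exp x ≤ 1 := Real.exp_le_one_iff.2 hx0.le
      nlinarith
  have := h (Set.mem_Iic.2 hu) (Set.mem_Iic.2 le_rfl) hu
  simp only [Real.exp_zero] at this
  nlinarith [this]

lemma exp_quad (y : ℝ) : Real.exp y ≤ 1 + y + y ^ 2 / 2 * Real.exp |y| := by
  rcases le_or_gt y 0 with hy | hy
  · have h1 := aux1 hy
    have h2 : (1:ℝ) ≤ Real.exp |y| := Real.one_le_exp (abs_nonneg y)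
    nlinarith [sq_nonneg y]
  · have hu : -y ≤ 0 := by linarith
    have h2 := aux2 hu
    have he : Real.exp (-y) * Real.exp y = 1 := by
      rw [← Real.exp_add]; simp
    rw [abs_of_pos hy]
    have hp : (0:ℝ) < Real.exp y := Real.exp_pos y
    nlinarith [mul_le_mul_of_nonneg_right h2 hp.le]

theorem stmt_15 {Ω : Type*} [MeasurableSpace Ω] (Q : Measure Ω) [IsProbabilityMeasure Q]
    (β₁ β₂ : Ω → ℝ) (hm₁ : Measurable β₁) (hm₂ : Measurable β₂)
    (h₁ : ∀ ω, 0 < β₁ ω) (h₂ : ∀ ω, 0 < β₂ ω)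
    (hi₁ : ∫ ω, β₁ ω ∂Q = 1) (hi₂ : ∫ ω, β₂ ω ∂Q = 1)
    (c : ℝ) (hc : 1 < c) (ε : ℝ) (hε : ε ∈ Set.Ioo (0:ℝ) 1)
    (htimid : ∀ ω, 1 / c ≤ β₂ ω / β₁ ω ∧ β₂ ω / β₁ ω ≤ c) :
    (-1 / ε) * Real.log (∫ ω, (β₂ ω / β₁ ω) ^ ε * β₁ ω ∂Q) ≥
      (∫ ω, Real.log (β₁ ω / β₂ ω) * β₁ ω ∂Q) -
        (ε / 2) * c ^ ε * (Real.log c) ^ 2 := by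
  obtain ⟨hε0, hε1⟩ := hε
  have hc0 : (0:ℝ) < c := lt_trans one_pos hc
  have hlc : (0:ℝ) < Real.log c := Real.log_pos hc
  set K : ℝ := ε ^ 2 / 2 * c ^ ε * Real.log c ^ 2 with hK
  have hcε : (0:ℝ) < c ^ ε := Real.rpow_pos_of_pos hc0 ε
  -- integrability of β₁
  have int₁ : Integrable β₁ Q := by
    by_contra h
    rw [integral_undef h] at hi₁
    norm_num at hi₁
  -- ratio positivity
  have ht : ∀ ω, 0 < β₂ ω / β₁ ω := fun ω => div_pos (h₂ ω) (h₁ ω)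
  -- |log t| ≤ log c
  have hlt : ∀ ω, |Real.log (β₂ ω / β₁ ω)| ≤ Real.log c := by
    intro ω
    rw [abs_le]
    constructor
    · have := Real.log_le_log (by positivity) (htimid ω).1
      rw [Real.log_div one_ne_zero hc0.ne'] at this
      simpa using this
    · exact Real.log_le_log (ht ω) (htimid ω).2
  -- pointwise bound
  have hpt : ∀ ω, (β₂ ω / β₁ ω) ^ ε * β₁ ω ≤
      β₁ ω - ε * (Real.log (β₁ ω / β₂ ω) * β₁ ω) + K * β₁ ω := by
    intro ω
    set t := β₂ ω / β₁ ω with htdef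
    have hlognn : Real.log (β₁ ω / β₂ ω) = -Real.log t := by
      rw [htdef, ← Real.log_inv, inv_div]
    rw [hlognn]
    have hlt' : |Real.log t| ≤ Real.log c := hlt ω
    have hrpow : t ^ ε = Real.exp (ε * Real.log t) := by
      rw [Real.rpow_def_of_pos (ht ω), mul_comm]
    have hbound := exp_quad (ε * Real.log t)
    have habs : |ε * Real.log t| = ε * |Real.log t| := by
      rw [abs_mul, abs_of_pos hε0]
    have hexpabs : Real.exp |ε * Real.log t| ≤ c ^ ε := by
      calc Real.exp |ε * Real.log t| = Real.exp (ε * |Real.log t|) := by rw [habs]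
        _ ≤ Real.exp (ε * Real.log c) :=
            Real.exp_le_exp.2 (mul_le_mul_of_nonneg_left hlt' hε0.le)
        _ = c ^ ε := by rw [← Real.log_rpow hc0, Real.exp_log hcε]
    have hsq : (ε * Real.log t) ^ 2 ≤ ε ^ 2 * Real.log c ^ 2 := by
      nlinarith [mul_le_mul hlt' hlt' (abs_nonneg (Real.log t)) hlc.le,
        sq_abs (Real.log t), sq_nonneg ε]
    have h1 : t ^ ε ≤ 1 + ε * Real.log t + K := by
      rw [hrpow]
      calc Real.exp (ε * Real.log t)
          ≤ 1 + ε * Real.log t + (ε * Real.log t) ^ 2 / 2 * Real.exp |ε * Real.log t| :=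
            hbound
        _ ≤ 1 + ε * Real.log t + ε ^ 2 * Real.log c ^ 2 / 2 * (c ^ ε) := by
            have hsqnn : (0:ℝ) ≤ (ε * Real.log t) ^ 2 / 2 := by positivity
            have he1 : (1:ℝ) ≤ Real.exp |ε * Real.log t| := Real.one_le_exp (abs_nonneg _)
            nlinarith [hexpabs, hsq, he1]
        _ = 1 + ε * Real.log t + K := by rw [hK]; ring
    have hb1 := (h₁ ω).le
    nlinarith [mul_le_mul_of_nonneg_right h1 hb1]
  -- integrability of the two integrands
  have intf : Integrable (fun ω => (β₂ ω / β₁ ω) ^ ε * β₁ ω) Q := by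
    apply Integrable.mono (int₁.const_mul (c ^ ε))
    · exact (((hm₂.div hm₁).pow_const ε).mul hm₁).aestronglyMeasurable
    · filter_upwards with ω
      have hfn : 0 ≤ (β₂ ω / β₁ ω) ^ ε * β₁ ω :=
        mul_nonneg (Real.rpow_nonneg (ht ω).le ε) (h₁ ω).le
      rw [Real.norm_of_nonneg hfn, Real.norm_of_nonneg (mul_nonneg hcε.le (h₁ ω).le)]
      have : (β₂ ω / β₁ ω) ^ ε ≤ c ^ ε :=
        Real.rpow_le_rpow (ht ω).le (htimid ω).2 hε0.le
      exact mul_le_mul_of_nonneg_right this (h₁ ω).le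
  have intg : Integrable (fun ω => Real.log (β₁ ω / β₂ ω) * β₁ ω) Q := by
    apply Integrable.mono (int₁.const_mul (Real.log c))
    · exact ((hm₁.div hm₂).log.mul hm₁).aestronglyMeasurable
    · filter_upwards with ω
      rw [Real.norm_of_nonneg (mul_nonneg hlc.le (h₁ ω).le), norm_mul,
        Real.norm_of_nonneg (h₁ ω).le]
      have : |Real.log (β₁ ω / β₂ ω)| ≤ Real.log c := by
        rw [show β₁ ω / β₂ ω = (β₂ ω / β₁ ω)⁻¹ by rw [inv_div], Real.log_inv, abs_neg]
        exact hlt ω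
      exact mul_le_mul_of_nonneg_right this (h₁ ω).le
  -- positivity of the integral
  set I : ℝ := ∫ ω, (β₂ ω / β₁ ω) ^ ε * β₁ ω ∂Q with hI
  have hIpos : 0 < I := by
    rw [hI]
    rw [integral_pos_iff_support_of_nonneg]
    · have : Function.support (fun ω => (β₂ ω / β₁ ω) ^ ε * β₁ ω) = Set.univ := by
        ext ω
        simp only [Function.mem_support, Set.mem_univ, iff_true]
        exact (mul_pos (Real.rpow_pos_of_pos (ht ω) ε) (h₁ ω)).ne'
      rw [this]
      simp
    · intro ω; exact mul_nonneg (Real.rpow_nonneg (ht ω).le ε) (h₁ ω).le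
    · exact intf
  -- integral bound
  set D : ℝ := ∫ ω, Real.log (β₁ ω / β₂ ω) * β₁ ω ∂Q with hD
  have hIle : I ≤ 1 - ε * D + K := by
    have h1 : I ≤ ∫ ω, (β₁ ω - ε * (Real.log (β₁ ω / β₂ ω) * β₁ ω) + K * β₁ ω) ∂Q :=
      integral_mono intf ((int₁.sub (intg.const_mul ε)).add (int₁.const_mul K)) hpt
    have e1 : ∀ ω, β₁ ω - ε * (Real.log (β₁ ω / β₂ ω) * β₁ ω) + K * β₁ ω
        = (1 + K) * β₁ ω - ε * (Real.log (β₁ ω / β₂ ω) * β₁ ω) := fun ω => by ring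
    simp only [e1] at h1
    rw [integral_sub (int₁.const_mul (1 + K)) (intg.const_mul ε), integral_const_mul,
      integral_const_mul, hi₁, ← hD] at h1
    linarith
  have hlog : Real.log I ≤ I - 1 := Real.log_le_sub_one_of_pos hIpos
  have hlog2 : Real.log I ≤ -(ε * D) + K := by linarith
  rw [ge_iff_le, show (-1 / ε) * Real.log I = (- Real.log I) / ε by ring,
    le_div_iff₀ hε0]
  rw [hK] at hlog2
  nlinarith [hlog2]
end

section
/- Let Q be a probability measure and β¹, β² positive measurable densities with ∫β¹dQ = ∫β²dQ = 1 and 1/c ≤ β¹/β² ≤ c pointwise for some c > 1. Then for every ε ∈ (0,1), (1/ε)·ln ∫(β¹/β²)^ε β¹ dQ ≤ D^{(−1)}(P¹∥P²) + (ε/2)·c^ε·(ln c)², where D^{(−1)}(P¹∥P²) := ∫ ln(β¹/β²)·β¹ dQ. -/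
open MeasureTheory


lemma exp_le_quad_neg {x : ℝ} (hx : x ≤ 0) : Real.exp x ≤ 1 + x + x ^ 2 / 2 := by
  have anti : AntitoneOn (fun y : ℝ => 1 + y + y ^ 2 / 2 - Real.exp y) (Set.Iic 0) := by
    apply antitoneOn_of_deriv_nonpos (convex_Iic 0)
    · fun_prop
    · fun_prop
    · intro y hy
      have hd : HasDerivAt (fun y : ℝ => 1 + y + y ^ 2 / 2 - Real.exp y)
          (1 + y - Real.exp y) y := by
        have := ((hasDerivAt_id y).const_add 1).add
          (((hasDerivAt_pow 2 y)).div_const 2)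
        have h2 := this.sub (Real.hasDerivAt_exp y)
        refine h2.congr_deriv ?_
        norm_num
      rw [hd.deriv]
      have := Real.add_one_le_exp y
      linarith
  have h0 : (0:ℝ) ∈ Set.Iic (0:ℝ) := Set.mem_Iic.mpr le_rfl
  have := anti (Set.mem_Iic.mpr hx) h0 hx
  simp at this
  linarith

lemma exp_le_quad_pos {x : ℝ} (hx : 0 ≤ x) :
    Real.exp x ≤ 1 + x + x ^ 2 / 2 * Real.exp x := by
  have mono : MonotoneOn (fun y : ℝ => Real.exp (-y) * (1 + y) + y ^ 2 / 2) (Set.Ici 0) := by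
    apply monotoneOn_of_deriv_nonneg (convex_Ici 0)
    · fun_prop
    · fun_prop
    · intro y hy
      have hd : HasDerivAt (fun y : ℝ => Real.exp (-y) * (1 + y) + y ^ 2 / 2)
          (y * (1 - Real.exp (-y))) y := by
        have he : HasDerivAt (fun y : ℝ => Real.exp (-y)) (-Real.exp (-y)) y := by
          simpa [Function.comp_def] using (Real.hasDerivAt_exp (-y)).comp y (hasDerivAt_neg y)
        have h1 := he.mul ((hasDerivAt_id y).const_add 1)
        have h2 := h1.add ((hasDerivAt_pow 2 y).div_const 2)
        refine h2.congr_deriv ?_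
        simp [id]
        ring
      rw [hd.deriv]
      have hy' : 0 < y := by simpa using hy
      have : Real.exp (-y) ≤ 1 := Real.exp_le_one_iff.mpr (by linarith)
      nlinarith
  have := mono (Set.mem_Ici.mpr (le_refl 0)) (Set.mem_Ici.mpr hx) hx
  simp at this
  have hex : (0:ℝ) < Real.exp x := Real.exp_pos x
  have h2 : Real.exp x * 1 ≤ Real.exp x * (Real.exp (-x) * (1 + x) + x ^ 2 / 2) := by
    exact mul_le_mul_of_nonneg_left this (le_of_lt hex)
  rw [mul_add, ← mul_assoc, ← Real.exp_add] at h2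
  simp at h2
  linarith

lemma exp_le_quad {x M : ℝ} (hM : 0 ≤ M) (hx : x ≤ M) :
    Real.exp x ≤ 1 + x + x ^ 2 / 2 * Real.exp M := by
  rcases le_or_gt x 0 with h | h
  · have := exp_le_quad_neg h
    have h1 : (1:ℝ) ≤ Real.exp M := Real.one_le_exp hM
    nlinarith [sq_nonneg x]
  · have := exp_le_quad_pos h.le
    have h1 : Real.exp x ≤ Real.exp M := Real.exp_le_exp.mpr hx
    nlinarith [sq_nonneg x]


theorem stmt_16 {Ω : Type*} [MeasurableSpace Ω] (Q : Measure Ω) [IsProbabilityMeasure Q]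
    (β₁ β₂ : Ω → ℝ) (hm₁ : Measurable β₁) (hm₂ : Measurable β₂)
    (h₁ : ∀ ω, 0 < β₁ ω) (h₂ : ∀ ω, 0 < β₂ ω)
    (hi₁ : ∫ ω, β₁ ω ∂Q = 1) (hi₂ : ∫ ω, β₂ ω ∂Q = 1)
    (c : ℝ) (hc : 1 < c)
    (htimid : ∀ ω, 1 / c ≤ β₁ ω / β₂ ω ∧ β₁ ω / β₂ ω ≤ c)
    (ε : ℝ) (hε : ε ∈ Set.Ioo (0:ℝ) 1) :
    (1 / ε) * Real.log (∫ ω, (β₁ ω / β₂ ω) ^ ε * β₁ ω ∂Q) ≤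
      (∫ ω, Real.log (β₁ ω / β₂ ω) * β₁ ω ∂Q) +
        (ε / 2) * c ^ ε * (Real.log c) ^ 2 := by
  obtain ⟨hε0, hε1⟩ := hε
  set r : Ω → ℝ := fun ω => β₁ ω / β₂ ω with hr_def
  set f : Ω → ℝ := fun ω => Real.log (r ω) with hf_def
  set L : ℝ := Real.log c with hL_def
  have hc0 : (0:ℝ) < c := by linarith
  have hL0 : 0 < L := Real.log_pos hc
  have hr : ∀ ω, 0 < r ω := fun ω => div_pos (h₁ ω) (h₂ ω)
  have hfb : ∀ ω, |f ω| ≤ L := by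
    intro ω
    rw [abs_le]
    constructor
    · have := Real.log_le_log (by positivity) (htimid ω).1
      rw [Real.log_div one_ne_zero (ne_of_gt hc0), Real.log_one] at this
      simpa [hf_def, hL_def] using this
    · exact Real.log_le_log (hr ω) (htimid ω).2
  set K : ℝ := ε ^ 2 * L ^ 2 / 2 * c ^ ε with hK_def
  have hcε : (0:ℝ) < c ^ ε := Real.rpow_pos_of_pos hc0 ε
  have hK0 : 0 < K := by positivity
  -- pointwise bound
  have hpt : ∀ ω, r ω ^ ε ≤ 1 + ε * f ω + K := by
    intro ω
    have h1 : r ω ^ ε = Real.exp (ε * f ω) := by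
      rw [Real.rpow_def_of_pos (hr ω), mul_comm]
    have h2 : ε * f ω ≤ ε * L := by
      have := (abs_le.mp (hfb ω)).2
      nlinarith
    have h3 : Real.exp (ε * f ω) ≤ 1 + ε * f ω + (ε * f ω) ^ 2 / 2 * Real.exp (ε * L) :=
      exp_le_quad (by positivity) h2
    have h4 : Real.exp (ε * L) = c ^ ε := by
      rw [Real.rpow_def_of_pos hc0, mul_comm]
    have h5 : (ε * f ω) ^ 2 ≤ ε ^ 2 * L ^ 2 := by
      have hb := abs_le.mp (hfb ω)
      have hf2 : f ω ^ 2 ≤ L ^ 2 := sq_le_sq' hb.1 hb.2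
      calc (ε * f ω) ^ 2 = ε ^ 2 * f ω ^ 2 := by ring
      _ ≤ ε ^ 2 * L ^ 2 := mul_le_mul_of_nonneg_left hf2 (sq_nonneg ε)
    rw [h1]
    calc Real.exp (ε * f ω) ≤ 1 + ε * f ω + (ε * f ω) ^ 2 / 2 * Real.exp (ε * L) := h3
    _ ≤ 1 + ε * f ω + K := by rw [h4, hK_def]; nlinarith
  -- integrability
  have hint1 : Integrable β₁ Q := integrable_of_integral_eq_one hi₁
  have hmf : Measurable f := (hm₁.div hm₂).log
  have hmr : Measurable fun ω => r ω ^ ε := by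
    have heq : (fun ω => r ω ^ ε) = fun ω => Real.exp (ε * f ω) := by
      funext ω
      rw [Real.rpow_def_of_pos (hr ω), mul_comm]
    rw [heq]
    exact (hmf.const_mul ε).exp
  have hintf : Integrable (fun ω => f ω * β₁ ω) Q := by
    apply hint1.bdd_mul hmf.aestronglyMeasurable
    exact Filter.Eventually.of_forall fun ω => by simpa using hfb ω
  have hintr : Integrable (fun ω => r ω ^ ε * β₁ ω) Q := by
    apply hint1.bdd_mul hmr.aestronglyMeasurable (c := c ^ ε)
    refine Filter.Eventually.of_forall fun ω => ?_
    rw [Real.norm_eq_abs, abs_of_nonneg (Real.rpow_nonneg (hr ω).le ε)]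
    exact Real.rpow_le_rpow (hr ω).le (htimid ω).2 hε0.le
  have hintb : Integrable (fun ω => β₁ ω + ε * (f ω * β₁ ω) + K * β₁ ω) Q :=
    (hint1.add (hintf.const_mul ε)).add (hint1.const_mul K)
  -- I > 0
  set I : ℝ := ∫ ω, r ω ^ ε * β₁ ω ∂Q with hI_def
  have hIpos : 0 < I := by
    have hmono : (∫ ω, (1/c) ^ ε * β₁ ω ∂Q) ≤ I := by
      apply integral_mono (hint1.const_mul _) hintr
      intro ω
      have : (1/c : ℝ) ^ ε ≤ r ω ^ ε :=
        Real.rpow_le_rpow (by positivity) (htimid ω).1 hε0.le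
      exact mul_le_mul_of_nonneg_right this (h₁ ω).le
    rw [integral_const_mul, hi₁, mul_one] at hmono
    calc (0:ℝ) < (1/c) ^ ε := Real.rpow_pos_of_pos (by positivity) ε
    _ ≤ I := hmono
  -- I ≤ 1 + ε D + K
  set D : ℝ := ∫ ω, f ω * β₁ ω ∂Q with hD_def
  have hIle : I ≤ 1 + ε * D + K := by
    have hmono : I ≤ ∫ ω, β₁ ω + ε * (f ω * β₁ ω) + K * β₁ ω ∂Q := by
      apply integral_mono hintr hintb
      intro ω
      calc r ω ^ ε * β₁ ω ≤ (1 + ε * f ω + K) * β₁ ω :=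
        mul_le_mul_of_nonneg_right (hpt ω) (h₁ ω).le
      _ = β₁ ω + ε * (f ω * β₁ ω) + K * β₁ ω := by ring
    have hA : Integrable (fun ω => β₁ ω + ε * (f ω * β₁ ω)) Q := hint1.add (hintf.const_mul ε)
    have hB : Integrable (fun ω => K * β₁ ω) Q := hint1.const_mul K
    rwa [integral_add hA hB, integral_add hint1 (hintf.const_mul ε), integral_const_mul,
      integral_const_mul, hi₁, mul_one] at hmono
  have hlog : Real.log I ≤ ε * D + K := by
    have := Real.log_le_sub_one_of_pos hIpos
    linarith
  have hgoal : (1/ε) * Real.log I ≤ D + (ε / 2) * c ^ ε * L ^ 2 := by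
    have h1 : (1/ε) * Real.log I ≤ (1/ε) * (ε * D + K) :=
      mul_le_mul_of_nonneg_left hlog (by positivity)
    have h2 : (1/ε) * (ε * D + K) = D + (ε / 2) * c ^ ε * L ^ 2 := by
      rw [hK_def]; field_simp
    linarith
  simpa [hI_def, hD_def, hf_def, hr_def, hL_def] using hgoal
end
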